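/- Let μ > 0, σ ≥ 0, and let A be the randomized pricing mechanism that posts price μ/2 with probability 1/2 and price μ + σ²/μ with probability 1/2. Then for every two-point mass distribution F with mean μ and variance exactly σ², REV(A;F) ≥ OPT(F)/4. -/
import Mathlib


open MeasureTheory

/-- Revenue of posting price `p` against valuation distribution `F`:
`REV(p;F) = p · P(X ≥ p)`. -/
noncomputable def rev (F : Measure ℝ) (p : ℝ) : ℝ :=
  p * (F (Set.Ici p)).toReal

/-- Optimal revenue `OPT(F) = sup_{p ≥ 0} p · P(X ≥ p)`. -/
noncomputable def opt (F : Measure ℝ) : ℝ :=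
  ⨆ p ∈ Set.Ici (0 : ℝ), rev F p

/-- Revenue of a randomized pricing mechanism `A` (a measure over prices):
`REV(A;F) = E_{p∼A}[REV(p;F)]`. -/
noncomputable def mrev (A F : Measure ℝ) : ℝ :=
  ∫ p, rev F p ∂A

/-- `F` is a `(μ,σ)`-distributed distribution: a probability measure on `[0,∞)`
with mean `m` and variance at most `s²`. -/
structure MeanVarLe (F : Measure ℝ) (m s : ℝ) : Prop where
  prob : IsProbabilityMeasure F
  supp : F (Set.Iio 0) = 0
  int_mean : Integrable (fun x => x) F
  int_sq : Integrable (fun x => x ^ 2) F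
  mean : ∫ x, x ∂F = m
  var_le : ∫ x, (x - m) ^ 2 ∂F ≤ s ^ 2

/-- A randomized pricing mechanism: a probability measure over prices in `[0,∞)`. -/
def IsPriceMech (A : Measure ℝ) : Prop :=
  IsProbabilityMeasure A ∧ A (Set.Iio 0) = 0

/-- A two-point mass distribution with mean `m` and variance exactly `s²`. -/
def IsTwoPoint (F : Measure ℝ) (m s : ℝ) : Prop :=
  ∃ x y α : ℝ, 0 ≤ x ∧ x < y ∧ 0 ≤ α ∧ α ≤ 1 ∧
    α * x + (1 - α) * y = m ∧ α * x ^ 2 + (1 - α) * y ^ 2 = m ^ 2 + s ^ 2 ∧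
    F = ENNReal.ofReal α • Measure.dirac x + ENNReal.ofReal (1 - α) • Measure.dirac y

lemma rev_two_point (x y α p : ℝ) (hxy : x < y) (hα0 : 0 ≤ α) (hα1 : α ≤ 1) :
    rev (ENNReal.ofReal α • Measure.dirac x + ENNReal.ofReal (1 - α) • Measure.dirac y) p
      = p * ((if p ≤ x then α else 0) + (if p ≤ y then (1 - α) else 0)) := by
  have hβ0 : 0 ≤ 1 - α := by linarith
  unfold rev
  rw [Measure.add_apply, Measure.smul_apply, Measure.smul_apply,
    Measure.dirac_apply, Measure.dirac_apply]
  simp only [Set.indicator, Set.mem_Ici, smul_eq_mul, Pi.one_apply]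
  split_ifs with h1 h2
  · rw [mul_one, mul_one, ← ENNReal.ofReal_add hα0 hβ0, ENNReal.toReal_ofReal (by linarith)]
  · exact absurd (h1.trans hxy.le) h2
  · simp [ENNReal.toReal_ofReal hβ0]
  · simp

lemma integrable_dirac'' (f : ℝ → ℝ) (a : ℝ) : Integrable f (Measure.dirac a) := by
  have h : f =ᵐ[Measure.dirac a] fun _ => f a := by
    rw [MeasureTheory.ae_dirac_eq]; exact Filter.eventually_pure.mpr rfl
  exact (integrable_const (f a)).congr h.symm

lemma opt_le_max (x y α : ℝ) (hx : 0 ≤ x) (hxy : x < y) (hα0 : 0 ≤ α) (hα1 : α ≤ 1) :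
    opt (ENNReal.ofReal α • Measure.dirac x + ENNReal.ofReal (1 - α) • Measure.dirac y)
      ≤ max x ((1 - α) * y) := by
  have hβ0 : 0 ≤ 1 - α := by linarith
  have hM : 0 ≤ max x ((1 - α) * y) := le_trans hx (le_max_left _ _)
  refine Real.iSup_le (fun p => Real.iSup_le (fun hp => ?_) hM) hM
  have hp0 : (0:ℝ) ≤ p := hp
  rw [rev_two_point x y α p hxy hα0 hα1]
  rcases le_or_gt p x with h1 | h1
  · have h2 : p ≤ y := h1.trans hxy.le
    rw [if_pos h1, if_pos h2]
    have he : p * (α + (1 - α)) = p := by ring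
    rw [he]
    exact h1.trans (le_max_left _ _)
  · rcases le_or_gt p y with h2 | h2
    · rw [if_neg (not_le.mpr h1), if_pos h2, zero_add]
      calc p * (1 - α) ≤ y * (1 - α) := mul_le_mul_of_nonneg_right h2 hβ0
        _ = (1 - α) * y := by ring
        _ ≤ _ := le_max_right _ _
    · rw [if_neg (not_le.mpr h1), if_neg (not_le.mpr h2)]
      simpa using hM

set_option maxHeartbeats 1000000 in
/-- Let `μ > 0`, `σ ≥ 0`, and let `A` be the randomized pricing mechanism
posting price `μ/2` with probability `1/2` and price `μ + σ²/μ` with probability `1/2`.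
Then `REV(A;F) ≥ OPT(F)/4` for every two-point mass distribution `F` with mean `μ` and
variance exactly `σ²`. -/
theorem stmt13 (μ σ : ℝ) (hμ : 0 < μ) (hσ : 0 ≤ σ) (A : Measure ℝ)
    (hA : A = (2⁻¹ : ENNReal) • Measure.dirac (μ / 2) +
        (2⁻¹ : ENNReal) • Measure.dirac (μ + σ ^ 2 / μ)) :
    ∀ F : Measure ℝ, IsTwoPoint F μ σ → opt F / 4 ≤ mrev A F := by
  rintro F ⟨x, y, α, hx0, hxy, hα0, hα1, hmean, hsec, hF⟩
  have hβ0 : (0:ℝ) ≤ 1 - α := by linarith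
  have ht : σ ^ 2 / μ * μ = σ ^ 2 := div_mul_cancel₀ _ hμ.ne'
  have ht0 : 0 ≤ σ ^ 2 / μ := div_nonneg (sq_nonneg σ) hμ.le
  -- compute mrev
  have hmrev : mrev A F = (rev F (μ / 2) + rev F (μ + σ ^ 2 / μ)) / 2 := by
    rw [hA]; unfold mrev
    rw [integral_add_measure ((integrable_dirac'' _ _).smul_measure (by norm_num))
        ((integrable_dirac'' _ _).smul_measure (by norm_num)),
      integral_smul_measure, integral_smul_measure, integral_dirac, integral_dirac]
    simp only [ENNReal.toReal_inv, ENNReal.toReal_ofNat, smul_eq_mul]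
    ring
  -- key identity for the variance
  have hσ2 : σ ^ 2 = (y - μ) * (μ - x) := by linear_combination (x + y) * hmean - hsec
  have hxm : x ≤ μ := by linarith [hmean, mul_nonneg hβ0 (sub_nonneg.2 hxy.le)]
  have hym : μ ≤ y := by linarith [hmean, mul_nonneg hα0 (sub_nonneg.2 hxy.le)]
  have hopt := opt_le_max x y α hx0 hxy hα0 hα1
  rw [← hF] at hopt
  have hrev1 := rev_two_point x y α (μ / 2) hxy hα0 hα1
  have hrev2 := rev_two_point x y α (μ + σ ^ 2 / μ) hxy hα0 hα1
  rw [← hF] at hrev1 hrev2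
  rw [hmrev]
  have hβyμ : (1 - α) * y ≤ μ := by linarith [hmean, mul_nonneg hα0 hx0]
  rcases le_or_gt (μ / 2) x with hx1 | hx1
  · -- case x ≥ μ/2
    have h2 : μ / 2 ≤ y := hx1.trans hxy.le
    rw [if_pos hx1, if_pos h2] at hrev1
    have hr1 : rev F (μ / 2) = μ / 2 := by rw [hrev1]; ring
    have hr2 : 0 ≤ rev F (μ + σ ^ 2 / μ) := by
      rw [hrev2]
      apply mul_nonneg (by linarith)
      split_ifs <;> linarith
    have hoμ : opt F ≤ μ := le_trans hopt (max_le hxm hβyμ)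
    linarith
  · -- case x < μ/2
    have hβy : μ - x ≤ (1 - α) * y := by linarith [hmean, mul_nonneg (sub_nonneg.2 hα1) hx0]
    have hMeq : max x ((1 - α) * y) = (1 - α) * y := max_eq_right (by linarith)
    rw [hMeq] at hopt
    have hy1 : μ / 2 ≤ y := by linarith
    rw [if_neg (not_le.mpr hx1), if_pos hy1, zero_add] at hrev1
    have hx2 : ¬ μ + σ ^ 2 / μ ≤ x := by push_neg; linarith
    rcases le_or_gt (μ + σ ^ 2 / μ) y with hy2 | hy2
    · -- y ≥ p2 : rev2 = p2 * (1-α)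
      rw [if_neg hx2, if_pos hy2, zero_add] at hrev2
      have hy0 : (0:ℝ) ≤ y := by linarith
      have hkey : μ * y ≤ 3 * (μ * μ) + 2 * σ ^ 2 := by
        linarith [hσ2, mul_nonneg hy0 (by linarith : (0:ℝ) ≤ μ - 2 * x),
          mul_nonneg hx0 hμ.le, sq_nonneg μ]
      have hy3 : y ≤ 3 * μ + 2 * (σ ^ 2 / μ) := by
        have h := (le_div_iff₀ hμ).mpr (show (y - 3 * μ) * μ ≤ 2 * σ ^ 2 by linarith [hkey])
        have h2 : (2 * σ ^ 2) / μ = 2 * (σ ^ 2 / μ) := by ring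
        linarith [h, h2]
      have hfin : (1 - α) * y ≤ (1 - α) * (3 * μ + 2 * (σ ^ 2 / μ)) :=
        mul_le_mul_of_nonneg_left hy3 hβ0
      rw [hrev1, hrev2]
      linarith [hopt, hfin]
    · -- y < p2 : rev2 = 0
      rw [if_neg hx2, if_neg (not_le.mpr hy2), add_zero, mul_zero] at hrev2
      have h1 : (y - μ) * μ < σ ^ 2 := by
        have : y - μ < σ ^ 2 / μ := by linarith
        exact (lt_div_iff₀ hμ).mp this
      have hyμ : y ≤ μ := by linarith [hσ2, mul_nonneg hx0 (sub_nonneg.2 hym)]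
      have hfin : (1 - α) * y ≤ (1 - α) * μ := mul_le_mul_of_nonneg_left hyμ hβ0
      rw [hrev1, hrev2]
      linarith
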